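/- arXiv:2406.07132 — 2 statements merged into one kernel-verified Lean document; each statement's English description precedes it below -/
import Mathlib

section
/- Let $G$ be a connected simple graph of order $n = 12$. If the signless Laplacian spectral radius satisfies $q(G) > 7 + 3\sqrt{5}$, then $G$ has a spanning tree with leaf degree at most $4$. -/
/-- The signless Laplacian matrix `Q(G) = D(G) + A(G)` of a simple graph, over `ℝ`. -/
noncomputable def signlessLap {V : Type*} [Fintype V] [DecidableEq V] (G : SimpleGraph V) :
    Matrix V V ℝ :=
  letI : DecidableRel G.Adj := Classical.decRel _
  G.degMatrix ℝ + G.adjMatrix ℝ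

/-- The signless Laplacian spectral radius `q(G)`: the largest eigenvalue of `Q(G)`. -/
noncomputable def qRadius {V : Type*} [Fintype V] [DecidableEq V] (G : SimpleGraph V) : ℝ :=
  sSup (spectrum ℝ (signlessLap G))

/-- `G` has a spanning tree whose leaf degree is at most `k`, i.e. a spanning tree `T`
in which every vertex is adjacent (in `T`) to at most `k` leaves of `T`. -/
def HasSpanningTreeWithLeafDegLE {V : Type*} (G : SimpleGraph V) (k : ℕ) : Prop :=
  ∃ T : SimpleGraph V, T ≤ G ∧ T.IsTree ∧
    ∀ v : V, {u : V | T.Adj v u ∧ (T.neighborSet u).ncard = 1}.ncard ≤ k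

/-- The join `G ∨ H` of two vertex-disjoint graphs: all edges between the two parts. -/
def SimpleGraph.graphJoin {α β : Type*} (G : SimpleGraph α) (H : SimpleGraph β) :
    SimpleGraph (α ⊕ β) where
  Adj x y :=
    match x, y with
    | Sum.inl a, Sum.inl b => G.Adj a b
    | Sum.inr a, Sum.inr b => H.Adj a b
    | Sum.inl _, Sum.inr _ => True
    | Sum.inr _, Sum.inl _ => True
  symm := by constructor; rintro (a | a) (b | b) h <;> first | trivial | exact G.adj_symm h | exact H.adj_symm h
  loopless := by constructor; rintro (a | a) h <;> first | exact G.irrefl h | exact H.irrefl h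

/-- The disjoint union `G ∪ H` of two vertex-disjoint graphs. -/
def SimpleGraph.graphDisjUnion {α β : Type*} (G : SimpleGraph α) (H : SimpleGraph β) :
    SimpleGraph (α ⊕ β) where
  Adj x y :=
    match x, y with
    | Sum.inl a, Sum.inl b => G.Adj a b
    | Sum.inr a, Sum.inr b => H.Adj a b
    | _, _ => False
  symm := by constructor; rintro (a | a) (b | b) h <;> first | trivial | exact G.adj_symm h | exact H.adj_symm h
  loopless := by constructor; rintro (a | a) h <;> first | exact G.irrefl h | exact H.irrefl h

open Finset Matrix SimpleGraph

namespace STLD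

variable {V : Type*} [Fintype V] [DecidableEq V]

lemma signlessLap_eq (G : SimpleGraph V) [inst : DecidableRel G.Adj] :
    signlessLap G = G.degMatrix ℝ + G.adjMatrix ℝ := by
  unfold signlessLap
  congr! 1 <;> congr! 1

lemma signlessLap_mulVec (G : SimpleGraph V) [DecidableRel G.Adj] (x : V → ℝ) (v : V) :
    (signlessLap G *ᵥ x) v = G.degree v * x v + ∑ u ∈ G.neighborFinset v, x u := by
  rw [signlessLap_eq, add_mulVec, Pi.add_apply, degMatrix_mulVec_apply, adjMatrix_mulVec_apply]

lemma signlessLap_transpose (G : SimpleGraph V) : (signlessLap G)ᵀ = signlessLap G := by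
  letI : DecidableRel G.Adj := Classical.decRel _
  rw [signlessLap_eq, transpose_add, Matrix.IsSymm.eq (isSymm_degMatrix (R := ℝ) (G := G)),
    Matrix.IsSymm.eq (isSymm_adjMatrix G)]

lemma signlessLap_nonneg (G : SimpleGraph V) (i j : V) : 0 ≤ signlessLap G i j := by
  letI : DecidableRel G.Adj := Classical.decRel _
  rw [signlessLap_eq]
  simp only [Matrix.add_apply, degMatrix, Matrix.diagonal_apply, adjMatrix_apply]
  positivity

/-- Perron-type bound: a positive weight vector with `Q w ≤ c w` bounds all eigenvalues. -/
lemma qRadius_le_of_weight (G : SimpleGraph V) (c : ℝ) (hc : 0 ≤ c) (w : V → ℝ)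
    (hw : ∀ i, 0 < w i) (hrow : ∀ i, (signlessLap G *ᵥ w) i ≤ c * w i) :
    qRadius G ≤ c := by
  apply Real.sSup_le _ hc
  intro lam hlam
  rw [spectrum.mem_iff] at hlam
  set Q := signlessLap G with hQ
  have hdet : (algebraMap ℝ (Matrix V V ℝ) lam - Q).det = 0 := by
    by_contra hne
    exact hlam ((Matrix.isUnit_iff_isUnit_det _).2 (isUnit_iff_ne_zero.2 hne))
  obtain ⟨x, hx0, hx⟩ := (Matrix.exists_mulVec_eq_zero_iff).2 hdet
  have heig : Q *ᵥ x = lam • x := by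
    have : (lam • (1 : Matrix V V ℝ) - Q) *ᵥ x = 0 := by
      rwa [Algebra.algebraMap_eq_smul_one] at hx
    rw [sub_mulVec, smul_mulVec, one_mulVec, sub_eq_zero] at this
    exact this.symm
  set y : V → ℝ := fun i => |x i| with hy
  have hkey : ∀ i, |lam| * y i ≤ (Q *ᵥ y) i := by
    intro i
    have h1 : (Q *ᵥ x) i = lam * x i := by rw [heig]; rfl
    have h2 : |lam * x i| = |∑ j, Q i j * x j| := by
      rw [← h1]; rfl
    calc |lam| * y i = |lam * x i| := by rw [hy, abs_mul]
      _ = |∑ j, Q i j * x j| := h2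
      _ ≤ ∑ j, |Q i j * x j| := Finset.abs_sum_le_sum_abs _ _
      _ = ∑ j, Q i j * y j := by
          refine Finset.sum_congr rfl fun j _ => ?_
          rw [abs_mul, abs_of_nonneg (signlessLap_nonneg G i j)]
      _ = (Q *ᵥ y) i := rfl
  have hS : 0 < ∑ i, w i * y i := by
    have hne : ∃ i, x i ≠ 0 := by
      by_contra h
      push_neg at h
      exact hx0 (funext h)
    obtain ⟨i, hi⟩ := hne
    refine Finset.sum_pos' (fun j _ => mul_nonneg (hw j).le (abs_nonneg _)) ⟨i, Finset.mem_univ i, ?_⟩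
    exact mul_pos (hw i) (abs_pos.2 hi)
  have hchain : |lam| * ∑ i, w i * y i ≤ c * ∑ i, w i * y i := by
    calc |lam| * ∑ i, w i * y i = ∑ i, w i * (|lam| * y i) := by
          rw [Finset.mul_sum]; refine Finset.sum_congr rfl fun i _ => by ring
      _ ≤ ∑ i, w i * (Q *ᵥ y) i :=
          Finset.sum_le_sum fun i _ => mul_le_mul_of_nonneg_left (hkey i) (hw i).le
      _ = ∑ j, (Q *ᵥ w) j * y j := by
          have hsymm : ∀ a b, Q a b = Q b a := fun a b =>
            (show Q b a = Q a b from congrFun (congrFun (signlessLap_transpose G) a) b).symm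
          simp only [Matrix.mulVec, dotProduct, Finset.mul_sum, Finset.sum_mul]
          rw [Finset.sum_comm]
          refine Finset.sum_congr rfl fun j _ => Finset.sum_congr rfl fun i _ => ?_
          rw [hsymm i j]; ring
      _ ≤ ∑ j, (c * w j) * y j :=
          Finset.sum_le_sum fun j _ => mul_le_mul_of_nonneg_right (hrow j) (abs_nonneg _)
      _ = c * ∑ i, w i * y i := by rw [Finset.mul_sum]; refine Finset.sum_congr rfl fun i _ => by ring
  have : |lam| ≤ c := le_of_mul_le_mul_right (by linarith [hchain]) hS
  exact (le_abs_self lam).trans this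


lemma sqrt5_gt : Real.sqrt 5 > 2.23 := by
  have h : (2.23:ℝ) = Real.sqrt (2.23^2) := by
    rw [Real.sqrt_sq]; norm_num
  rw [h]
  apply Real.sqrt_lt_sqrt <;> norm_num

lemma sqrt5_lt : Real.sqrt 5 < 2.24 := by
  have h : (2.24:ℝ) = Real.sqrt (2.24^2) := by
    rw [Real.sqrt_sq]; norm_num
  rw [h]
  apply Real.sqrt_lt_sqrt <;> norm_num

/-- Structure (b): all vertices outside `{v, w0}` have all their neighbours in `{v, w0}`. -/
lemma qRadius_le_case_b (G : SimpleGraph V) (hn : Fintype.card V = 12) (v w0 : V)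
    (h : ∀ x, x ≠ v → x ≠ w0 → ∀ y, G.Adj x y → y = v ∨ y = w0) :
    qRadius G ≤ 7 + 3 * Real.sqrt 5 := by
  classical
  letI : DecidableRel G.Adj := Classical.decRel _
  have hs5 : Real.sqrt 5 ^ 2 = 5 := Real.sq_sqrt (by norm_num)
  have hs5' := sqrt5_gt
  set c : ℝ := 7 + 3 * Real.sqrt 5 with hc
  set α : ℝ := (5 + 3 * Real.sqrt 5) / 2 with hα
  have hα1 : (1:ℝ) ≤ α := by rw [hα]; nlinarith
  set w : V → ℝ := fun x => if x = v ∨ x = w0 then α else 1 with hwdef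
  have hwpos : ∀ i, 0 < w i := by
    intro i; rw [hwdef]; dsimp only; split <;> nlinarith
  have hwle : ∀ i, w i ≤ α := by
    intro i; rw [hwdef]; dsimp only; split
    · exact le_refl _
    · exact hα1
  apply qRadius_le_of_weight G c (by rw [hc]; nlinarith) w hwpos
  intro i
  rw [signlessLap_mulVec]
  by_cases hiv : i = v ∨ i = w0
  · -- center vertices
    have hwi : w i = α := by rw [hwdef]; simp [hiv]
    have hdeg : (G.degree i : ℝ) ≤ 11 := by
      have := G.degree_lt_card_verts i
      rw [hn] at this
      exact_mod_cast Nat.lt_succ_iff.mp (by omega)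
    have hsum : ∑ u ∈ G.neighborFinset i, w u ≤ α + 10 := by
      have hsub : G.neighborFinset i ⊆ Finset.univ.erase i := by
        intro u hu
        simp only [SimpleGraph.mem_neighborFinset] at hu
        exact Finset.mem_erase.mpr ⟨fun he => G.irrefl (he ▸ hu), Finset.mem_univ u⟩
      have hone : ∃ t, ∀ u, u ≠ i → (u = v ∨ u = w0) → u = t := by
        rcases hiv with rfl | rfl
        · exact ⟨w0, fun u hu h' => h'.resolve_left hu⟩
        · exact ⟨v, fun u hu h' => h'.resolve_right hu⟩
      obtain ⟨t, ht⟩ := hone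
      calc ∑ u ∈ G.neighborFinset i, w u ≤ ∑ u ∈ Finset.univ.erase i, w u :=
            Finset.sum_le_sum_of_subset_of_nonneg hsub (fun u _ _ => (hwpos u).le)
        _ ≤ ∑ u ∈ Finset.univ.erase i, (1 + if u = t then α - 1 else 0) := by
            refine Finset.sum_le_sum fun u hu => ?_
            have hui := (Finset.mem_erase.mp hu).1
            rw [hwdef]; dsimp only
            by_cases h' : u = v ∨ u = w0
            · rw [if_pos h', ht u hui h', if_pos rfl]; ring_nf; exact le_refl _
            · rw [if_neg h']; split <;> nlinarith
        _ = (Finset.univ.erase i).card +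
              ∑ u ∈ Finset.univ.erase i, (if u = t then α - 1 else 0) := by
            rw [Finset.sum_add_distrib, Finset.sum_const, nsmul_eq_mul, mul_one]
        _ ≤ 11 + (α - 1) := by
            have h1 : (Finset.univ.erase i).card = 11 := by
              rw [Finset.card_erase_of_mem (Finset.mem_univ i), Finset.card_univ, hn]
            rw [h1]
            refine add_le_add (by norm_num) ?_
            calc ∑ u ∈ Finset.univ.erase i, (if u = t then α - 1 else 0)
                ≤ ∑ u ∈ Finset.univ, (if u = t then α - 1 else 0) :=
                  Finset.sum_le_sum_of_subset_of_nonneg (Finset.subset_univ _)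
                    (fun u _ _ => by split <;> nlinarith)
              _ = α - 1 := by rw [Finset.sum_ite_eq' Finset.univ t (fun _ => α - 1)]; simp
        _ ≤ α + 10 := by nlinarith
    have hwipos := hwpos i
    calc (G.degree i : ℝ) * w i + ∑ u ∈ G.neighborFinset i, w u
        ≤ 11 * α + (α + 10) := by
          rw [hwi]
          exact add_le_add (mul_le_mul_of_nonneg_right hdeg (by nlinarith)) hsum
      _ = 12 * α + 10 := by ring
      _ = c * α := by rw [hc, hα]; nlinarith
      _ = c * w i := by rw [hwi]
  · -- outer vertices
    push_neg at hiv
    have hwi : w i = 1 := by rw [hwdef]; simp [hiv.1, hiv.2]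
    have hNsub : G.neighborFinset i ⊆ {v, w0} := by
      intro u hu
      simp only [SimpleGraph.mem_neighborFinset] at hu
      rcases h i hiv.1 hiv.2 u hu with h1 | h1 <;> simp [h1]
    have hdeg : (G.degree i : ℝ) ≤ 2 := by
      have := Finset.card_le_card hNsub
      have h2 : ({v, w0} : Finset V).card ≤ 2 := Finset.card_insert_le _ _ |>.trans (by simp)
      rw [SimpleGraph.degree]
      exact_mod_cast le_trans this h2
    have hsum : ∑ u ∈ G.neighborFinset i, w u ≤ 2 * α := by
      calc ∑ u ∈ G.neighborFinset i, w u ≤ ∑ u ∈ G.neighborFinset i, α :=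
            Finset.sum_le_sum fun u _ => hwle u
        _ = (G.degree i : ℝ) * α := by rw [Finset.sum_const, SimpleGraph.degree, nsmul_eq_mul]
        _ ≤ 2 * α := by nlinarith
    calc (G.degree i : ℝ) * w i + ∑ u ∈ G.neighborFinset i, w u
        ≤ 2 * 1 + 2 * α := by
          rw [hwi]
          exact add_le_add (by nlinarith) hsum
      _ = c * w i := by rw [hwi, hc, hα]; ring

/-- Structure (a): five vertices whose only possible neighbour is `v`. -/
lemma qRadius_le_case_a (G : SimpleGraph V) (hn : Fintype.card V = 12) (v : V) (P : Finset V)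
    (hP : P.card = 5) (hvP : v ∉ P) (hpend : ∀ x ∈ P, ∀ y, G.Adj x y → y = v) :
    qRadius G ≤ 7 + 3 * Real.sqrt 5 := by
  classical
  letI : DecidableRel G.Adj := Classical.decRel _
  have hs5 : Real.sqrt 5 ^ 2 = 5 := Real.sq_sqrt (by norm_num)
  have hs5' := sqrt5_gt
  set c : ℝ := 7 + 3 * Real.sqrt 5 with hc
  set w : V → ℝ := fun x => if x = v then 1 else if x ∈ P then 2/25 else 19/50 with hwdef
  have hwpos : ∀ i, 0 < w i := by
    intro i; rw [hwdef]; dsimp only; split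
    · norm_num
    · split <;> norm_num
  have hwle : ∀ i, w i ≤ 1 := by
    intro i; rw [hwdef]; dsimp only; split
    · exact le_refl _
    · split <;> norm_num
  apply qRadius_le_of_weight G c (by rw [hc]; nlinarith) w hwpos
  intro i
  rw [signlessLap_mulVec]
  by_cases hiv : i = v
  · subst hiv
    have hwi : w i = 1 := by rw [hwdef]; simp
    have hdeg : (G.degree i : ℝ) ≤ 11 := by
      have := G.degree_lt_card_verts i
      rw [hn] at this
      exact_mod_cast Nat.lt_succ_iff.mp (by omega)
    have hsum : ∑ u ∈ G.neighborFinset i, w u ≤ 134/50 := by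
      have hsub : G.neighborFinset i ⊆ Finset.univ.erase i := by
        intro u hu
        simp only [SimpleGraph.mem_neighborFinset] at hu
        exact Finset.mem_erase.mpr ⟨fun he => G.irrefl (he ▸ hu), Finset.mem_univ u⟩
      have hPsub : P ⊆ Finset.univ.erase i := by
        intro u hu
        exact Finset.mem_erase.mpr ⟨fun he => hvP (he ▸ hu), Finset.mem_univ u⟩
      calc ∑ u ∈ G.neighborFinset i, w u ≤ ∑ u ∈ Finset.univ.erase i, w u :=
            Finset.sum_le_sum_of_subset_of_nonneg hsub (fun u _ _ => (hwpos u).le)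
        _ ≤ ∑ u ∈ Finset.univ.erase i, ((19:ℝ)/50 - if u ∈ P then 3/10 else 0) := by
            refine Finset.sum_le_sum fun u hu => ?_
            have hui := (Finset.mem_erase.mp hu).1
            rw [hwdef]; dsimp only
            rw [if_neg hui]
            by_cases h' : u ∈ P
            · rw [if_pos h', if_pos h']; norm_num
            · rw [if_neg h', if_neg h']; norm_num
        _ = (Finset.univ.erase i).card * ((19:ℝ)/50) -
              ∑ u ∈ Finset.univ.erase i, (if u ∈ P then (3:ℝ)/10 else 0) := by
            rw [Finset.sum_sub_distrib, Finset.sum_const, nsmul_eq_mul]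
        _ = 134/50 := by
            rw [Finset.sum_ite_mem, Finset.inter_eq_right.mpr hPsub, Finset.sum_const, hP,
              Finset.card_erase_of_mem (Finset.mem_univ i), Finset.card_univ, hn]
            norm_num
    calc (G.degree i : ℝ) * w i + ∑ u ∈ G.neighborFinset i, w u
        ≤ 11 * 1 + 134/50 := by
          rw [hwi]
          exact add_le_add (by nlinarith) hsum
      _ ≤ c * w i := by rw [hwi, hc]; nlinarith
  · by_cases hiP : i ∈ P
    · -- pendant vertices
      have hwi : w i = 2/25 := by rw [hwdef]; simp [hiv, hiP]
      have hNsub : G.neighborFinset i ⊆ {v} := by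
        intro u hu
        simp only [SimpleGraph.mem_neighborFinset] at hu
        simp [hpend i hiP u hu]
      have hdeg : (G.degree i : ℝ) ≤ 1 := by
        have := Finset.card_le_card hNsub
        rw [SimpleGraph.degree]
        exact_mod_cast le_trans this (by simp)
      have hsum : ∑ u ∈ G.neighborFinset i, w u ≤ 1 := by
        calc ∑ u ∈ G.neighborFinset i, w u ≤ ∑ u ∈ ({v} : Finset V), w u :=
              Finset.sum_le_sum_of_subset_of_nonneg hNsub (fun u _ _ => (hwpos u).le)
          _ = w v := Finset.sum_singleton _ _
          _ ≤ 1 := hwle v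
      calc (G.degree i : ℝ) * w i + ∑ u ∈ G.neighborFinset i, w u
          ≤ 1 * (2/25) + 1 := by
            rw [hwi]
            exact add_le_add (by nlinarith) hsum
        _ ≤ c * w i := by rw [hwi, hc]; nlinarith
    · -- middle vertices
      have hwi : w i = 19/50 := by rw [hwdef]; simp [hiv, hiP]
      have hNsub : G.neighborFinset i ⊆ (Finset.univ \ P).erase i := by
        intro u hu
        simp only [SimpleGraph.mem_neighborFinset] at hu
        refine Finset.mem_erase.mpr ⟨fun he => G.irrefl (he ▸ hu), ?_⟩
        refine Finset.mem_sdiff.mpr ⟨Finset.mem_univ u, fun huP => ?_⟩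
        exact hiv (hpend u huP i hu.symm)
      have hcard : ((Finset.univ \ P).erase i).card = 6 := by
        have hmem : i ∈ Finset.univ \ P := Finset.mem_sdiff.mpr ⟨Finset.mem_univ i, hiP⟩
        rw [Finset.card_erase_of_mem hmem, Finset.card_sdiff_of_subset (Finset.subset_univ _),
          Finset.card_univ, hn, hP]
      have hdeg : (G.degree i : ℝ) ≤ 6 := by
        have := Finset.card_le_card hNsub
        rw [SimpleGraph.degree]
        rw [hcard] at this
        exact_mod_cast this
      have hsum : ∑ u ∈ G.neighborFinset i, w u ≤ 145/50 := by
        calc ∑ u ∈ G.neighborFinset i, w u ≤ ∑ u ∈ (Finset.univ \ P).erase i, w u :=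
              Finset.sum_le_sum_of_subset_of_nonneg hNsub (fun u _ _ => (hwpos u).le)
          _ ≤ ∑ u ∈ (Finset.univ \ P).erase i, ((19:ℝ)/50 + if u = v then 31/50 else 0) := by
              refine Finset.sum_le_sum fun u hu => ?_
              have huP := (Finset.mem_sdiff.mp (Finset.mem_erase.mp hu).2).2
              rw [hwdef]; dsimp only
              by_cases h' : u = v
              · rw [if_pos h', if_pos h']; norm_num
              · rw [if_neg h', if_neg huP, if_neg h']; norm_num
          _ = ((Finset.univ \ P).erase i).card * ((19:ℝ)/50) +
                ∑ u ∈ (Finset.univ \ P).erase i, (if u = v then (31:ℝ)/50 else 0) := by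
              rw [Finset.sum_add_distrib, Finset.sum_const, nsmul_eq_mul]
          _ ≤ 6 * ((19:ℝ)/50) + 31/50 := by
              rw [hcard]
              refine add_le_add (le_refl _) ?_
              calc ∑ u ∈ (Finset.univ \ P).erase i, (if u = v then (31:ℝ)/50 else 0)
                  ≤ ∑ u ∈ Finset.univ, (if u = v then (31:ℝ)/50 else 0) :=
                    Finset.sum_le_sum_of_subset_of_nonneg (Finset.subset_univ _)
                      (fun u _ _ => by split <;> norm_num)
                _ = 31/50 := by
                    rw [Finset.sum_ite_eq' Finset.univ v (fun _ => (31:ℝ)/50)]; simp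
          _ = 145/50 := by norm_num
      calc (G.degree i : ℝ) * w i + ∑ u ∈ G.neighborFinset i, w u
          ≤ 6 * (19/50) + 145/50 := by
            rw [hwi]
            exact add_le_add (by nlinarith) hsum
        _ ≤ c * w i := by rw [hwi, hc]; nlinarith

section Comb

attribute [local instance] Classical.propDecidable

variable {T : SimpleGraph V}

/-- Leaf: vertex of degree one. -/
def IsLf (T : SimpleGraph V) (u : V) : Prop := (T.neighborSet u).ncard = 1

/-- Neighbourhood as a finset. -/
noncomputable def nbr (T : SimpleGraph V) (v : V) : Finset V :=
  (Set.toFinite (T.neighborSet v)).toFinset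

lemma mem_nbr {v x : V} : x ∈ nbr T v ↔ T.Adj v x := by
  rw [nbr, Set.Finite.mem_toFinset, SimpleGraph.mem_neighborSet]

/-- Degree. -/
noncomputable def deg (T : SimpleGraph V) (v : V) : ℕ := (T.neighborSet v).ncard

lemma deg_eq_card_nbr (v : V) : deg T v = (nbr T v).card := by
  rw [deg, nbr, Set.ncard_eq_toFinset_card]

lemma isLf_iff {u : V} : IsLf T u ↔ deg T u = 1 := Iff.rfl

/-- The set of leaves adjacent to `v`. -/
noncomputable def leafFin (T : SimpleGraph V) (v : V) : Finset V :=
  (nbr T v).filter (fun u => IsLf T u)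

lemma mem_leafFin {v x : V} : x ∈ leafFin T v ↔ T.Adj v x ∧ IsLf T x := by
  rw [leafFin, Finset.mem_filter, mem_nbr]

/-- The leaf degree. -/
noncomputable def ld (T : SimpleGraph V) (v : V) : ℕ := (leafFin T v).card

/-- The potential function. -/
noncomputable def Phi (T : SimpleGraph V) : ℕ := ∑ v, (ld T v) ^ 2

lemma ld_eq_ncard (v : V) :
    {u : V | T.Adj v u ∧ (T.neighborSet u).ncard = 1}.ncard = ld T v := by
  have : {u : V | T.Adj v u ∧ (T.neighborSet u).ncard = 1} = ↑(leafFin T v) := by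
    ext x
    simp only [Set.mem_setOf_eq, Finset.coe_filter, leafFin, mem_nbr, IsLf, Set.mem_setOf_eq, Set.mem_sep_iff,
      Finset.mem_coe, Finset.mem_filter]
    exact mem_leafFin.symm
  rw [this, Set.ncard_coe_finset]
  rfl

lemma ld_le_deg (v : V) : ld T v ≤ deg T v := by
  rw [ld, deg_eq_card_nbr]
  exact Finset.card_filter_le _ _

lemma unique_nbr {u a b : V} (hu : IsLf T u) (ha : T.Adj u a) (hb : T.Adj u b) : a = b := by
  rw [IsLf] at hu
  exact (Set.ncard_le_one (Set.toFinite _)).mp (le_of_eq hu) a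
    ((T.mem_neighborSet u a).mpr ha) b ((T.mem_neighborSet u b).mpr hb)

lemma nbr_eq_of_isLf {u a : V} (hu : IsLf T u) (ha : T.Adj u a) :
    T.neighborSet u = {a} := by
  obtain ⟨x, hx⟩ := Set.ncard_eq_one.mp hu
  have := hx ▸ (SimpleGraph.mem_neighborSet T u a |>.mpr ha)
  rw [Set.mem_singleton_iff] at this
  rw [← this] at hx
  exact hx

lemma deg_pos_of_connected (hT : T.Connected) (hcard : 2 ≤ Fintype.card V) (x : V) :
    1 ≤ deg T x := by
  obtain ⟨y, hy⟩ := Fintype.exists_ne_of_one_lt_card (by omega) x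
  obtain ⟨w⟩ := hT.preconnected x y
  obtain ⟨b, hb, -, -⟩ := SimpleGraph.Walk.exists_eq_cons_of_ne (Ne.symm hy) w
  rw [deg]
  exact (Set.ncard_pos (Set.toFinite _)).mpr ⟨b, hb⟩

lemma not_isLf_of_two_le_deg {x : V} (h : 2 ≤ deg T x) : ¬ IsLf T x := by
  rw [isLf_iff]; omega

/-- The unique neighbour of a leaf is internal (given at least three vertices). -/
lemma deg_parent_ge_two (hT : T.Connected) (hcard : 3 ≤ Fintype.card V) {z t : V}
    (hz : IsLf T z) (ht : T.Adj z t) : 2 ≤ deg T t := by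
  by_contra hlt
  push_neg at hlt
  have hNt : T.neighborSet t = {z} := nbr_eq_of_isLf (by
    have h1 : 1 ≤ deg T t := deg_pos_of_connected hT (by omega) t
    rw [deg] at h1 hlt
    show (T.neighborSet t).ncard = 1
    omega) ht.symm
  have hNz : T.neighborSet z = {t} := nbr_eq_of_isLf hz ht
  -- pick a third vertex
  have hne : ((Finset.univ.erase z).erase t).Nonempty := by
    rw [← Finset.card_pos]
    have h2 : (Finset.univ.erase z).card = Fintype.card V - 1 := by
      rw [Finset.card_erase_of_mem (Finset.mem_univ z), Finset.card_univ]
    have h3 := Finset.pred_card_le_card_erase (s := Finset.univ.erase z) (a := t)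
    omega
  obtain ⟨y, hy⟩ := hne
  have hyt : y ≠ t := (Finset.mem_erase.mp hy).1
  have hyz : y ≠ z := (Finset.mem_erase.mp (Finset.mem_erase.mp hy).2).1
  obtain ⟨w0⟩ := hT.preconnected t y
  set p := w0.toPath with hp
  have hpath : (p : T.Walk t y).IsPath := p.2
  obtain ⟨b, hb, q, hq⟩ := SimpleGraph.Walk.exists_eq_cons_of_ne (Ne.symm hyt) p.1
  have hbz : b = z := by
    have := (T.mem_neighborSet t b).mpr hb
    rw [hNt] at this
    exact this
  have hNb : T.neighborSet b = {t} := by rw [hbz]; exact hNz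
  have hby : b ≠ y := by rw [hbz]; exact fun h => hyz h.symm
  obtain ⟨b2, hb2, q2, hq2⟩ := SimpleGraph.Walk.exists_eq_cons_of_ne hby q
  have hb2t : b2 = t := by
    have := (T.mem_neighborSet b b2).mpr hb2
    rw [hNb] at this
    exact this
  have hq2mem : t ∈ q.support := by
    rw [hq2, SimpleGraph.Walk.support_cons]
    refine List.mem_cons_of_mem _ ?_
    rw [← hb2t]
    exact SimpleGraph.Walk.start_mem_support q2
  have hnodup := hpath.support_nodup
  rw [hq, SimpleGraph.Walk.support_cons] at hnodup
  exact (List.nodup_cons.mp hnodup).1 hq2mem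

/-- A vertex of degree at most one is not on any cycle. -/
lemma not_mem_cycle_support {u : V} (h1 : deg T u ≤ 1) {v : V} {c : T.Walk v v}
    (hc : c.IsCycle) : u ∉ c.support := by
  intro hu
  have hc' := hc.rotate hu
  generalize c.rotate u hu = c' at hc'
  obtain ⟨b, hadj, q, rfl⟩ : ∃ (b : V) (h : T.Adj u b) (q : T.Walk b u),
      c' = SimpleGraph.Walk.cons h q := by
    cases c' with
    | nil => exact absurd hc' SimpleGraph.Walk.IsCycle.not_of_nil
    | cons h q => exact ⟨_, h, q, rfl⟩
  obtain ⟨y, h2, q2, heq⟩ := SimpleGraph.Walk.exists_eq_cons_of_ne hadj.ne q.reverse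
  have hyb : y = b := by
    rw [deg] at h1
    exact (Set.ncard_le_one (Set.toFinite _)).mp h1 y
      ((T.mem_neighborSet u y).mpr h2) b ((T.mem_neighborSet u b).mpr hadj)
  subst hyb
  have hmem : s(u, y) ∈ q.edges := by
    have h3 : s(u, y) ∈ q.reverse.edges := by
      rw [heq, SimpleGraph.Walk.edges_cons]
      exact List.mem_cons_self
    rwa [SimpleGraph.Walk.edges_reverse, List.mem_reverse] at h3
  have htrail := hc'.isTrail.edges_nodup
  rw [SimpleGraph.Walk.edges_cons, List.nodup_cons] at htrail
  exact htrail.1 hmem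

/-- A leaf not equal to either endpoint is not on a path. -/
lemma leaf_not_mem_path_support {u : V} (hdeg : deg T u ≤ 1) :
    ∀ {x y : V} (p : T.Walk x y), p.IsPath → u ≠ x → u ≠ y → u ∉ p.support := by
  intro x y p
  induction p with
  | nil => intro _ hx _; simpa using hx
  | @cons a b y' h q ih =>
    intro hp hx hy
    rw [SimpleGraph.Walk.support_cons, List.mem_cons]
    rintro (rfl | hmem)
    · exact hx rfl
    · by_cases hbu : b = u
      · have hne : b ≠ y' := by rw [hbu]; exact hy
        obtain ⟨y2, h2, q2, hq2⟩ := SimpleGraph.Walk.exists_eq_cons_of_ne hne q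
        have hy2a : y2 = a := by
          rw [deg] at hdeg
          have h2' : T.Adj u y2 := hbu ▸ h2
          have ha' : T.Adj u a := hbu ▸ h.symm
          exact (Set.ncard_le_one (Set.toFinite _)).mp hdeg y2
            ((T.mem_neighborSet u y2).mpr h2') a ((T.mem_neighborSet u a).mpr ha')
        have hmem2 := (SimpleGraph.Walk.cons_isPath_iff h q).mp hp
        apply hmem2.2
        rw [hq2, SimpleGraph.Walk.support_cons]
        refine List.mem_cons_of_mem _ ?_
        rw [← hy2a]
        exact SimpleGraph.Walk.start_mem_support q2
      · exact ih ((SimpleGraph.Walk.cons_isPath_iff h q).mp hp).1 (fun hh => hbu hh.symm) hy hmem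


/-- Every connected graph has a spanning tree. -/
lemma exists_spanning_tree (G : SimpleGraph V) (hG : G.Connected) :
    ∃ T, T ≤ G ∧ T.IsTree := by
  generalize hn : G.edgeSet.ncard = n
  induction n using Nat.strong_induction_on generalizing G with
  | _ n ih =>
    by_cases hac : G.IsAcyclic
    · exact ⟨G, le_refl G, ⟨hG, hac⟩⟩
    · rw [SimpleGraph.IsAcyclic] at hac
      push_neg at hac
      obtain ⟨v, c, hc⟩ := hac
      obtain ⟨b, hadj, q, rfl⟩ : ∃ (b : V) (h : G.Adj v b) (q : G.Walk b v),
          c = SimpleGraph.Walk.cons h q := by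
        cases c with
        | nil => exact absurd hc SimpleGraph.Walk.IsCycle.not_of_nil
        | cons h q => exact ⟨_, h, q, rfl⟩
      have he : s(v, b) ∈ (SimpleGraph.Walk.cons hadj q).edges := by
        rw [SimpleGraph.Walk.edges_cons]
        exact List.mem_cons_self
      set H := G \ SimpleGraph.fromEdgeSet {s(v, b)} with hH
      have hreach : H.Reachable v b :=
        (SimpleGraph.adj_and_reachable_delete_edges_iff_exists_cycle.mpr ⟨v, _, hc, he⟩).2
      have hHle : H ≤ G := sdiff_le
      have hstep : ∀ x y : V, G.Adj x y → H.Reachable x y := by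
        intro x y hxy
        by_cases hE : s(x, y) = s(v, b)
        · rw [Sym2.eq_iff] at hE
          rcases hE with ⟨rfl, rfl⟩ | ⟨rfl, rfl⟩
          · exact hreach
          · exact hreach.symm
        · refine SimpleGraph.Adj.reachable ?_
          rw [hH, SimpleGraph.sdiff_adj]
          refine ⟨hxy, ?_⟩
          rw [SimpleGraph.fromEdgeSet_adj]
          rintro ⟨h1, -⟩
          exact hE (by simpa using h1)
      have hHconn : H.Connected := by
        haveI := hG.nonempty
        refine SimpleGraph.Connected.mk fun x y => ?_
        obtain ⟨w⟩ := hG.preconnected x y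
        induction w with
        | nil => exact SimpleGraph.Reachable.refl _
        | cons h q ihw => exact (hstep _ _ h).trans ihw
      have hedges : H.edgeSet = G.edgeSet \ {s(v, b)} := by
        rw [hH, SimpleGraph.edgeSet_sdiff, SimpleGraph.edgeSet_fromEdgeSet,
          SimpleGraph.edgeSet_sdiff_sdiff_isDiag]
      have hlt : H.edgeSet.ncard < n := by
        rw [hedges, ← hn]
        have h1 := Set.ncard_diff_singleton_of_mem
          ((SimpleGraph.mem_edgeSet G).mpr hadj)
        have h2 : 1 ≤ G.edgeSet.ncard := (Set.ncard_pos (Set.toFinite _)).mpr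
          ⟨s(v, b), (SimpleGraph.mem_edgeSet G).mpr hadj⟩
        omega
      obtain ⟨T, hT1, hT2⟩ := ih _ hlt H hHconn rfl
      exact ⟨T, le_trans hT1 hHle, hT2⟩

/-- Replace the pendant edge `us` by the edge `uz`. -/
noncomputable def rewire (T : SimpleGraph V) (u s z : V) : SimpleGraph V :=
  SimpleGraph.fromEdgeSet ((T.edgeSet \ {s(u, s)}) ∪ {s(u, z)})

lemma rewire_adj {u s z : V} (huz : u ≠ z) {a b : V} :
    (rewire T u s z).Adj a b ↔ ((T.Adj a b ∧ s(a, b) ≠ s(u, s)) ∨ s(a, b) = s(u, z)) := by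
  rw [rewire, SimpleGraph.fromEdgeSet_adj]
  simp only [Set.mem_union, Set.mem_diff, Set.mem_singleton_iff, SimpleGraph.mem_edgeSet]
  constructor
  · rintro ⟨h1 | h2, hab⟩
    · exact Or.inl ⟨h1.1, h1.2⟩
    · exact Or.inr h2
  · rintro (⟨h1, h2⟩ | h3)
    · exact ⟨Or.inl ⟨h1, h2⟩, h1.ne⟩
    · refine ⟨Or.inr h3, ?_⟩
      rintro rfl
      rw [Sym2.eq_iff] at h3
      rcases h3 with ⟨rfl, rfl⟩ | ⟨rfl, rfl⟩ <;> exact huz rfl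

section Rewire

variable {u s z : V} (hu : IsLf T u) (hus : T.Adj u s) (huz : u ≠ z) (hzs : z ≠ s)

include hu hus huz in
lemma rewire_nbr_u : (rewire T u s z).neighborSet u = {z} := by
  ext y
  rw [SimpleGraph.mem_neighborSet, rewire_adj huz, Set.mem_singleton_iff]
  constructor
  · rintro (⟨h1, h2⟩ | h3)
    · exact absurd (by rw [unique_nbr hu h1 hus]) h2
    · exact Sym2.congr_right.mp h3
  · rintro rfl
    exact Or.inr rfl

include hus huz hzs in
lemma rewire_nbr_s : (rewire T u s z).neighborSet s = T.neighborSet s \ {u} := by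
  have husn : u ≠ s := hus.ne
  ext y
  rw [SimpleGraph.mem_neighborSet, rewire_adj huz, Set.mem_diff, Set.mem_singleton_iff,
    SimpleGraph.mem_neighborSet]
  constructor
  · rintro (⟨h1, h2⟩ | h3)
    · refine ⟨h1, ?_⟩
      rintro rfl
      exact h2 (Sym2.eq_swap)
    · rw [Sym2.eq_iff] at h3
      rcases h3 with ⟨rfl, rfl⟩ | ⟨rfl, rfl⟩
      · exact absurd rfl husn
      · exact absurd rfl hzs
  · rintro ⟨h1, h2⟩
    refine Or.inl ⟨h1, ?_⟩
    intro h3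
    rw [Sym2.eq_iff] at h3
    rcases h3 with ⟨rfl, -⟩ | ⟨-, rfl⟩
    · exact husn rfl
    · exact h2 rfl

include hu hus huz hzs in
lemma rewire_nbr_z : (rewire T u s z).neighborSet z = insert u (T.neighborSet z) := by
  ext y
  rw [SimpleGraph.mem_neighborSet, rewire_adj huz, Set.mem_insert_iff,
    SimpleGraph.mem_neighborSet]
  constructor
  · rintro (⟨h1, h2⟩ | h3)
    · exact Or.inr h1
    · rw [Sym2.eq_iff] at h3
      rcases h3 with ⟨h4, -⟩ | ⟨-, rfl⟩
      · exact absurd h4 (Ne.symm huz)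
      · exact Or.inl rfl
  · rintro (rfl | h1)
    · exact Or.inr Sym2.eq_swap
    · refine Or.inl ⟨h1, ?_⟩
      intro h3
      rw [Sym2.eq_iff] at h3
      rcases h3 with ⟨rfl, rfl⟩ | ⟨rfl, rfl⟩
      · exact huz rfl
      · exact hzs rfl

include huz in
lemma rewire_nbr_other {x : V} (hx1 : x ≠ u) (hx2 : x ≠ s) (hx3 : x ≠ z) :
    (rewire T u s z).neighborSet x = T.neighborSet x := by
  ext y
  rw [SimpleGraph.mem_neighborSet, rewire_adj huz, SimpleGraph.mem_neighborSet]
  constructor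
  · rintro (⟨h1, h2⟩ | h3)
    · exact h1
    · rw [Sym2.eq_iff] at h3
      rcases h3 with ⟨rfl, rfl⟩ | ⟨rfl, rfl⟩
      · exact absurd rfl hx1
      · exact absurd rfl hx3
  · intro h1
    refine Or.inl ⟨h1, ?_⟩
    intro h3
    rw [Sym2.eq_iff] at h3
    rcases h3 with ⟨rfl, rfl⟩ | ⟨rfl, rfl⟩
    · exact hx1 rfl
    · exact hx2 rfl

include hu hus huz in
lemma rewire_deg_u : deg (rewire T u s z) u = 1 := by
  rw [deg, rewire_nbr_u hu hus huz]
  exact Set.ncard_singleton z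

include hus huz hzs in
lemma rewire_deg_s : deg (rewire T u s z) s + 1 = deg T s := by
  rw [deg, deg, rewire_nbr_s hus huz hzs]
  have hmem : u ∈ T.neighborSet s := (T.mem_neighborSet s u).mpr hus.symm
  have h1 := Set.ncard_diff_singleton_of_mem hmem
  have h2 : 1 ≤ (T.neighborSet s).ncard :=
    (Set.ncard_pos (Set.toFinite _)).mpr ⟨u, hmem⟩
  omega

include hu hus huz hzs in
lemma rewire_deg_z : deg (rewire T u s z) z = deg T z + 1 := by
  rw [deg, deg, rewire_nbr_z hu hus huz hzs]
  have hmem : u ∉ T.neighborSet z := by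
    intro h
    rw [SimpleGraph.mem_neighborSet] at h
    exact hzs (unique_nbr hu h.symm hus)
  exact Set.ncard_insert_of_notMem hmem (Set.toFinite _)

include huz in
lemma rewire_deg_other {x : V} (hx1 : x ≠ u) (hx2 : x ≠ s) (hx3 : x ≠ z) :
    deg (rewire T u s z) x = deg T x := by
  rw [deg, deg, rewire_nbr_other huz hx1 hx2 hx3]

lemma rewire_le {G : SimpleGraph V} (hTG : T ≤ G) (hz : G.Adj u z) : rewire T u s z ≤ G := by
  intro a b hab
  rw [rewire_adj hz.ne] at hab
  rcases hab with ⟨h1, -⟩ | h3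
  · exact hTG h1
  · rw [Sym2.eq_iff] at h3
    rcases h3 with ⟨rfl, rfl⟩ | ⟨rfl, rfl⟩
    · exact hz
    · exact hz.symm

include hu hus huz hzs in
lemma rewire_isTree (hT : T.IsTree) : (rewire T u s z).IsTree := by
  have hdegu' : deg (rewire T u s z) u ≤ 1 := le_of_eq (rewire_deg_u hu hus huz)
  haveI hne : Nonempty V := hT.isConnected.nonempty
  have hkey : ∀ x y : V, x ≠ u → y ≠ u → (rewire T u s z).Reachable x y := by
    intro x y hx hy
    obtain ⟨w0⟩ := hT.isConnected.preconnected x y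
    set p := w0.toPath with hp
    have hup : u ∉ (p : T.Walk x y).support :=
      leaf_not_mem_path_support (le_of_eq hu) p.1 p.2 (Ne.symm hx) (Ne.symm hy)
    have hedges : ∀ e ∈ (p : T.Walk x y).edges, e ∈ (rewire T u s z).edgeSet := by
      intro e he
      have h1 := (p : T.Walk x y).edges_subset_edgeSet he
      have h2 : e ≠ s(u, s) := by
        rintro rfl
        exact hup (SimpleGraph.Walk.fst_mem_support_of_mem_edges _ he)
      rw [rewire, SimpleGraph.edgeSet_fromEdgeSet]
      exact ⟨Or.inl ⟨h1, h2⟩, T.not_isDiag_of_mem_edgeSet h1⟩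
    exact ((p : T.Walk x y).transfer _ hedges).reachable
  have hadj : (rewire T u s z).Adj u z := by
    rw [rewire_adj huz]
    exact Or.inr rfl
  constructor
  · refine SimpleGraph.Connected.mk fun x y => ?_
    by_cases hx : x = u <;> by_cases hy : y = u
    · rw [hx, hy]
    · rw [hx]
      exact (hadj.reachable).trans (hkey z y (Ne.symm huz) hy)
    · rw [hy]
      exact ((hadj.reachable).trans (hkey z x (Ne.symm huz) hx)).symm
    · exact hkey x y hx hy
  · intro v c hc
    have hns : u ∉ c.support := not_mem_cycle_support hdegu' hc
    have hedges : ∀ e ∈ c.edges, e ∈ T.edgeSet := by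
      intro e he
      have h1 := c.edges_subset_edgeSet he
      rw [rewire, SimpleGraph.edgeSet_fromEdgeSet] at h1
      rcases h1.1 with h4 | h4
      · exact h4.1
      · exfalso
        apply hns
        rw [Set.mem_singleton_iff] at h4
        exact SimpleGraph.Walk.fst_mem_support_of_mem_edges c (h4 ▸ he)
    exact absurd (hc.transfer hedges) (hT.IsAcyclic _)


include hu hus huz in
lemma rewire_adj_u {y : V} : (rewire T u s z).Adj u y ↔ y = z := by
  have h := Set.ext_iff.mp (rewire_nbr_u hu hus huz) y
  simpa [SimpleGraph.mem_neighborSet] using h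

include hus huz hzs in
lemma rewire_adj_s {y : V} : (rewire T u s z).Adj s y ↔ T.Adj s y ∧ y ≠ u := by
  have h := Set.ext_iff.mp (rewire_nbr_s hus huz hzs) y
  simpa [SimpleGraph.mem_neighborSet] using h

include hu hus huz hzs in
lemma rewire_adj_z {y : V} : (rewire T u s z).Adj z y ↔ (y = u ∨ T.Adj z y) := by
  have h := Set.ext_iff.mp (rewire_nbr_z hu hus huz hzs) y
  simpa [SimpleGraph.mem_neighborSet] using h

include huz in
lemma rewire_adj_other {x y : V} (hx1 : x ≠ u) (hx2 : x ≠ s) (hx3 : x ≠ z) :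
    (rewire T u s z).Adj x y ↔ T.Adj x y := by
  have h := Set.ext_iff.mp (rewire_nbr_other (T := T) huz hx1 hx2 hx3) y
  simpa [SimpleGraph.mem_neighborSet] using h

include hu hus huz hzs in
lemma rewire_isLf_u : IsLf (rewire T u s z) u := by
  rw [isLf_iff, rewire_deg_u hu hus huz]

include hu hus huz hzs in
lemma rewire_not_isLf_z (hdz : 1 ≤ deg T z) : ¬ IsLf (rewire T u s z) z := by
  rw [isLf_iff, rewire_deg_z hu hus huz hzs]
  omega

include hu hus huz hzs in
lemma statusB (hdegs : 3 ≤ deg T s) {y : V} (hyz : y ≠ z) :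
    (IsLf (rewire T u s z) y ↔ IsLf T y) := by
  by_cases h1 : y = u
  · rw [h1]
    exact iff_of_true (rewire_isLf_u hu hus huz hzs) hu
  by_cases h2 : y = s
  · rw [h2]
    have h3 := rewire_deg_s hus huz hzs
    apply iff_of_false <;> rw [isLf_iff] <;> omega
  · rw [isLf_iff, isLf_iff, rewire_deg_other huz h1 h2 hyz]

include hu hus huz hzs in
lemma statusA (hdegs : 3 ≤ deg T s) (hdegz : 2 ≤ deg T z) (y : V) :
    (IsLf (rewire T u s z) y ↔ IsLf T y) := by
  by_cases h3 : y = z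
  · rw [h3]
    have h4 := rewire_deg_z hu hus huz hzs
    apply iff_of_false <;> rw [isLf_iff] <;> omega
  · exact statusB hu hus huz hzs hdegs h3

include hu hus huz hzs in
lemma rewire_leafFin_s
    (hstat : ∀ y, T.Adj s y → y ≠ u → (IsLf (rewire T u s z) y ↔ IsLf T y)) :
    leafFin (rewire T u s z) s = (leafFin T s).erase u := by
  ext y
  rw [mem_leafFin, Finset.mem_erase, mem_leafFin, rewire_adj_s hus huz hzs]
  constructor
  · rintro ⟨⟨h1, h2⟩, h3⟩
    exact ⟨h2, h1, (hstat y h1 h2).mp h3⟩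
  · rintro ⟨h2, h1, h3⟩
    exact ⟨⟨h1, h2⟩, (hstat y h1 h2).mpr h3⟩

include hu hus huz hzs in
lemma rewire_ld_s (hstat : ∀ y, T.Adj s y → y ≠ u → (IsLf (rewire T u s z) y ↔ IsLf T y)) :
    ld (rewire T u s z) s + 1 = ld T s := by
  rw [ld, ld, rewire_leafFin_s hu hus huz hzs hstat,
    Finset.card_erase_of_mem (mem_leafFin.mpr ⟨hus.symm, hu⟩)]
  have h1 : 1 ≤ (leafFin T s).card := Finset.card_pos.mpr ⟨u, mem_leafFin.mpr ⟨hus.symm, hu⟩⟩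
  omega

include hu hus huz hzs in
lemma rewire_ld_z_A (hdegs : 3 ≤ deg T s) (hdegz : 2 ≤ deg T z) :
    ld (rewire T u s z) z = ld T z + 1 := by
  have heq : leafFin (rewire T u s z) z = insert u (leafFin T z) := by
    ext y
    rw [mem_leafFin, Finset.mem_insert, mem_leafFin, rewire_adj_z hu hus huz hzs]
    constructor
    · rintro ⟨rfl | h1, h2⟩
      · exact Or.inl rfl
      · exact Or.inr ⟨h1, (statusA hu hus huz hzs hdegs hdegz y).mp h2⟩
    · rintro (rfl | ⟨h1, h2⟩)
      · exact ⟨Or.inl rfl, rewire_isLf_u hu hus huz hzs⟩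
      · exact ⟨Or.inr h1, (statusA hu hus huz hzs hdegs hdegz y).mpr h2⟩
  rw [ld, ld, heq, Finset.card_insert_of_notMem]
  intro hmem
  have h1 := (mem_leafFin.mp hmem).1
  exact hzs (unique_nbr hu h1.symm hus)

include hu hus huz hzs in
lemma rewire_ld_u (hdegs : 3 ≤ deg T s) (hdz : 1 ≤ deg T z) :
    ld (rewire T u s z) u = 0 ∧ ld T u = 0 := by
  constructor
  · rw [ld, Finset.card_eq_zero]
    ext y
    simp only [Finset.notMem_empty, iff_false, mem_leafFin, not_and]
    rw [rewire_adj_u hu hus huz]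
    rintro rfl
    exact rewire_not_isLf_z hu hus huz hzs hdz
  · rw [ld, Finset.card_eq_zero]
    ext y
    simp only [Finset.notMem_empty, iff_false, mem_leafFin, not_and]
    intro h1
    rw [unique_nbr hu h1 hus]
    rw [isLf_iff]
    omega

include hu hus huz hzs in
lemma rewire_ld_other_A (hdegs : 3 ≤ deg T s) (hdegz : 2 ≤ deg T z) {x : V}
    (hx2 : x ≠ s) (hx3 : x ≠ z) : ld (rewire T u s z) x = ld T x := by
  by_cases hx1 : x = u
  · rw [hx1]
    obtain ⟨h1, h2⟩ := rewire_ld_u hu hus huz hzs hdegs (by omega)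
    rw [h1, h2]
  · rw [ld, ld]
    congr 1
    ext y
    rw [mem_leafFin, mem_leafFin, rewire_adj_other huz hx1 hx2 hx3]
    rw [and_congr_right_iff]
    intro _
    exact statusA hu hus huz hzs hdegs hdegz y

/-- Two-point exchange formula for sums. -/
lemma sum_split (f g : V → ℕ) (a b : V) (hab : a ≠ b)
    (h : ∀ x, x ≠ a → x ≠ b → f x = g x) :
    (∑ x, f x) + (g a + g b) = (∑ x, g x) + (f a + f b) := by
  have h1 : ∀ k : V → ℕ, ∑ x, k x = ∑ x ∈ ({a, b} : Finset V)ᶜ, k x + (k a + k b) := by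
    intro k
    rw [← Finset.sum_compl_add_sum ({a, b} : Finset V) k, Finset.sum_pair hab]
  have h2 : ∑ x ∈ (({a, b} : Finset V))ᶜ, f x = ∑ x ∈ (({a, b} : Finset V))ᶜ, g x := by
    refine Finset.sum_congr rfl fun x hx => ?_
    rw [Finset.mem_compl, Finset.mem_insert, Finset.mem_singleton] at hx
    push_neg at hx
    exact h x hx.1 hx.2
  rw [h1 f, h1 g, h2]
  omega

/-- Three-point exchange formula for sums. -/
lemma sum_split3 (f g : V → ℕ) (a b c : V) (hab : a ≠ b) (hac : a ≠ c) (hbc : b ≠ c)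
    (h : ∀ x, x ≠ a → x ≠ b → x ≠ c → f x = g x) :
    (∑ x, f x) + (g a + g b + g c) = (∑ x, g x) + (f a + f b + f c) := by
  have hmem : ∀ k : V → ℕ, ∑ x ∈ ({a, b, c} : Finset V), k x = k a + k b + k c := by
    intro k
    rw [Finset.sum_insert (by simp [hab, hac]), Finset.sum_pair hbc]
    ring
  have h1 : ∀ k : V → ℕ, ∑ x, k x = ∑ x ∈ ({a, b, c} : Finset V)ᶜ, k x + (k a + k b + k c) := by
    intro k
    rw [← Finset.sum_compl_add_sum ({a, b, c} : Finset V) k, hmem]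
  have h2 : ∑ x ∈ (({a, b, c} : Finset V))ᶜ, f x = ∑ x ∈ (({a, b, c} : Finset V))ᶜ, g x := by
    refine Finset.sum_congr rfl fun x hx => ?_
    rw [Finset.mem_compl, Finset.mem_insert, Finset.mem_insert, Finset.mem_singleton] at hx
    push_neg at hx
    exact h x hx.1 hx.2.1 hx.2.2
  rw [h1 f, h1 g, h2]
  omega

end Rewire

lemma moveA {G T : SimpleGraph V} (hT : T.IsTree) (hTG : T ≤ G)
    {u s z : V} (hu : IsLf T u) (hus : T.Adj u s) (hz : G.Adj u z) (hzs : z ≠ s)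
    (hdegs : 3 ≤ deg T s) (hdegz : 2 ≤ deg T z) :
    ∃ T', T' ≤ G ∧ T'.IsTree ∧ ld T' s + 1 = ld T s ∧ ld T' z = ld T z + 1 ∧
      Phi T' + (ld T s ^ 2 + ld T z ^ 2) = Phi T + (ld T' s ^ 2 + ld T' z ^ 2) := by
  have huz : u ≠ z := hz.ne
  refine ⟨rewire T u s z, rewire_le hTG hz, rewire_isTree hu hus huz hzs hT, ?_, ?_, ?_⟩
  · exact rewire_ld_s hu hus huz hzs (fun y _ _ => statusA hu hus huz hzs hdegs hdegz y)
  · exact rewire_ld_z_A hu hus huz hzs hdegs hdegz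
  · have hsum := sum_split (fun x => ld (rewire T u s z) x ^ 2) (fun x => ld T x ^ 2) s z
      (Ne.symm hzs)
      (fun x h1 h2 => by
        show ld (rewire T u s z) x ^ 2 = ld T x ^ 2
        rw [rewire_ld_other_A hu hus huz hzs hdegs hdegz h1 h2])
    rw [Phi, Phi]
    omega

lemma moveB {G T : SimpleGraph V} (hcard : 3 ≤ Fintype.card V) (hT : T.IsTree) (hTG : T ≤ G)
    {u s z : V} (hu : IsLf T u) (hus : T.Adj u s) (hz : G.Adj u z) (hzs : z ≠ s)
    (hdegs : 3 ≤ deg T s) (hlz : IsLf T z) :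
    ∃ T', T' ≤ G ∧ T'.IsTree ∧ Phi T' < Phi T := by
  have huz : u ≠ z := hz.ne
  obtain ⟨t, hNz⟩ := Set.ncard_eq_one.mp hlz
  have ht : T.Adj z t := by
    have h0 : t ∈ T.neighborSet z := by rw [hNz]; exact rfl
    exact h0
  have hzt_unique : ∀ y, T.Adj z y → y = t := fun y hy => by
    have h0 : y ∈ T.neighborSet z := hy
    rw [hNz] at h0
    exact h0
  have htu : t ≠ u := by
    rintro rfl
    exact hzs (unique_nbr hu ht.symm hus)
  have htz : t ≠ z := ht.ne'
  have hdegt : 2 ≤ deg T t := deg_parent_ge_two hT.isConnected hcard hlz ht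
  have hRle : rewire T u s z ≤ G := rewire_le hTG hz
  have hRtree : (rewire T u s z).IsTree := rewire_isTree hu hus huz hzs hT
  have hdz1 : 1 ≤ deg T z := by rw [isLf_iff] at hlz; omega
  have hnlzR : ¬ IsLf (rewire T u s z) z := rewire_not_isLf_z hu hus huz hzs hdz1
  have hnltR : ¬ IsLf (rewire T u s z) t := by
    by_cases hts : t = s
    · rw [isLf_iff, hts]
      have h0 := rewire_deg_s (T := T) hus huz hzs
      omega
    · rw [statusB hu hus huz hzs hdegs htz]
      exact not_isLf_of_two_le_deg hdegt
  have hldTz : ld T z = 0 := by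
    rw [ld, Finset.card_eq_zero]
    rw [Finset.eq_empty_iff_forall_notMem]
    intro y hy
    rw [mem_leafFin] at hy
    have h1 := hzt_unique y hy.1
    have h2 := hy.2
    rw [h1] at h2
    exact not_isLf_of_two_le_deg hdegt h2
  have hldRz : ld (rewire T u s z) z = 1 := by
    have heq : leafFin (rewire T u s z) z = {u} := by
      ext y
      rw [mem_leafFin, Finset.mem_singleton, rewire_adj_z hu hus huz hzs]
      constructor
      · rintro ⟨h0, h2⟩
        rcases h0 with rfl | h1
        · rfl
        · exact absurd h2 (by rw [hzt_unique y h1]; exact hnltR)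
      · rintro rfl
        exact ⟨Or.inl rfl, rewire_isLf_u hu hus huz hzs⟩
    rw [ld, heq, Finset.card_singleton]
  by_cases hts : t = s
  · -- the leaf `z` hangs on `s` itself
    have hAdjsz : T.Adj s z := by rw [← hts]; exact ht.symm
    have hlfs : leafFin (rewire T u s z) s = ((leafFin T s).erase u).erase z := by
      ext y
      rw [mem_leafFin, Finset.mem_erase, Finset.mem_erase, mem_leafFin,
        rewire_adj_s hus huz hzs]
      constructor
      · rintro ⟨⟨h1, h2⟩, h3⟩
        have hyz : y ≠ z := by rintro rfl; exact hnlzR h3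
        exact ⟨hyz, h2, h1, (statusB hu hus huz hzs hdegs hyz).mp h3⟩
      · rintro ⟨hyz, h2, h1, h3⟩
        exact ⟨⟨h1, h2⟩, (statusB hu hus huz hzs hdegs hyz).mpr h3⟩
    have hms : u ∈ leafFin T s := mem_leafFin.mpr ⟨hus.symm, hu⟩
    have hmz : z ∈ (leafFin T s).erase u :=
      Finset.mem_erase.mpr ⟨Ne.symm huz, mem_leafFin.mpr ⟨hAdjsz, hlz⟩⟩
    have hldRs : ld (rewire T u s z) s + 2 = ld T s := by
      rw [ld, ld, hlfs, Finset.card_erase_of_mem hmz, Finset.card_erase_of_mem hms]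
      have h1 : 1 ≤ (leafFin T s).card := Finset.card_pos.mpr ⟨u, hms⟩
      have h2 : 1 ≤ ((leafFin T s).erase u).card := Finset.card_pos.mpr ⟨z, hmz⟩
      rw [Finset.card_erase_of_mem hms] at h2
      omega
    have hothers : ∀ x, x ≠ s → x ≠ z → ld (rewire T u s z) x ^ 2 = ld T x ^ 2 := by
      intro x h1 h2
      by_cases hxu : x = u
      · rw [hxu]
        obtain ⟨a1, a2⟩ := rewire_ld_u hu hus huz hzs hdegs hdz1
        rw [a1, a2]
      · have heq : leafFin (rewire T u s z) x = leafFin T x := by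
          ext y
          rw [mem_leafFin, mem_leafFin, rewire_adj_other huz hxu h1 h2]
          refine and_congr_right fun h3 => ?_
          have hyz : y ≠ z := by
            rintro rfl
            exact h1 (by rw [← hts]; exact hzt_unique x h3.symm)
          exact statusB hu hus huz hzs hdegs hyz
        rw [ld, ld, heq]
    have hsum := sum_split (fun x => ld (rewire T u s z) x ^ 2) (fun x => ld T x ^ 2) s z
      (Ne.symm hzs) hothers
    refine ⟨rewire T u s z, hRle, hRtree, ?_⟩
    have e1 : ld T z ^ 2 = 0 := by simp [hldTz]
    have e2 : ld (rewire T u s z) z ^ 2 = 1 := by simp [hldRz]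
    have e3 : ld T s ^ 2 = ld (rewire T u s z) s ^ 2 + 4 * ld (rewire T u s z) s + 4 := by
      rw [← hldRs]; ring
    rw [Phi, Phi]
    omega
  · -- the leaf `z` hangs on a third vertex `t`
    have hzNotAdjS : ¬ T.Adj s z := fun h => hts ((hzt_unique s h.symm).symm)
    have hldRs : ld (rewire T u s z) s + 1 = ld T s := by
      refine rewire_ld_s hu hus huz hzs (fun y h1 _ => ?_)
      have hyz : y ≠ z := by rintro rfl; exact hzNotAdjS h1
      exact statusB hu hus huz hzs hdegs hyz
    have hmzt : z ∈ leafFin T t := mem_leafFin.mpr ⟨ht.symm, hlz⟩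
    have hldRt : ld (rewire T u s z) t + 1 = ld T t := by
      have heq : leafFin (rewire T u s z) t = (leafFin T t).erase z := by
        ext y
        rw [mem_leafFin, Finset.mem_erase, mem_leafFin, rewire_adj_other huz htu hts htz]
        constructor
        · rintro ⟨h1, h2⟩
          have hyz : y ≠ z := by rintro rfl; exact hnlzR h2
          exact ⟨hyz, h1, (statusB hu hus huz hzs hdegs hyz).mp h2⟩
        · rintro ⟨hyz, h1, h2⟩
          exact ⟨h1, (statusB hu hus huz hzs hdegs hyz).mpr h2⟩
      rw [ld, ld, heq, Finset.card_erase_of_mem hmzt]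
      have h1 : 1 ≤ (leafFin T t).card := Finset.card_pos.mpr ⟨z, hmzt⟩
      omega
    have hothers : ∀ x, x ≠ s → x ≠ t → x ≠ z → ld (rewire T u s z) x ^ 2 = ld T x ^ 2 := by
      intro x h1 h2 h3
      by_cases hxu : x = u
      · rw [hxu]
        obtain ⟨a1, a2⟩ := rewire_ld_u hu hus huz hzs hdegs hdz1
        rw [a1, a2]
      · have heq : leafFin (rewire T u s z) x = leafFin T x := by
          ext y
          rw [mem_leafFin, mem_leafFin, rewire_adj_other huz hxu h1 h3]
          refine and_congr_right fun h4 => ?_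
          have hyz : y ≠ z := by
            rintro rfl
            exact h2 (hzt_unique x h4.symm)
          exact statusB hu hus huz hzs hdegs hyz
        rw [ld, ld, heq]
    have hsum := sum_split3 (fun x => ld (rewire T u s z) x ^ 2) (fun x => ld T x ^ 2) s t z
      (Ne.symm hts) (Ne.symm hzs) htz hothers
    refine ⟨rewire T u s z, hRle, hRtree, ?_⟩
    have e1 : ld T z ^ 2 = 0 := by simp [hldTz]
    have e2 : ld (rewire T u s z) z ^ 2 = 1 := by simp [hldRz]
    have e3 : ld T s ^ 2 = ld (rewire T u s z) s ^ 2 + 2 * ld (rewire T u s z) s + 1 := by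
      rw [← hldRs]; ring
    have e4 : ld T t ^ 2 = ld (rewire T u s z) t ^ 2 + 2 * ld (rewire T u s z) t + 1 := by
      rw [← hldRt]; ring
    rw [Phi, Phi]
    omega

lemma key_step {G T : SimpleGraph V} (hcard : 3 ≤ Fintype.card V) (hT : T.IsTree) (hTG : T ≤ G)
    (hmin : ∀ T', T' ≤ G → T'.IsTree → Phi T ≤ Phi T')
    {u s z : V} (hu : IsLf T u) (hus : T.Adj u s) (hdegs : 3 ≤ deg T s)
    (hz : G.Adj u z) (hzs : z ≠ s) :
    2 ≤ deg T z ∧ ld T s ≤ ld T z + 1 := by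
  have hdz1 : 1 ≤ deg T z := deg_pos_of_connected hT.isConnected (by omega) z
  have hdz2 : 2 ≤ deg T z := by
    by_contra h
    have hlz : IsLf T z := by rw [isLf_iff]; omega
    obtain ⟨T', h1, h2, h3⟩ := moveB hcard hT hTG hu hus hz hzs hdegs hlz
    exact absurd (hmin T' h1 h2) (by omega)
  obtain ⟨T', h1, h2, e1, e2, e3⟩ := moveA hT hTG hu hus hz hzs hdegs hdz2
  refine ⟨hdz2, ?_⟩
  have h4 := hmin T' h1 h2
  have hsq1 : ld T s ^ 2 = ld T' s ^ 2 + 2 * ld T' s + 1 := by rw [← e1]; ring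
  have hsq2 : ld T' z ^ 2 = ld T z ^ 2 + 2 * ld T z + 1 := by rw [e2]; ring
  omega

lemma count3 {T : SimpleGraph V} {x1 x2 x3 : V} (h12 : x1 ≠ x2) (h13 : x1 ≠ x3)
    (h23 : x2 ≠ x3) (hn1 : ¬ IsLf T x1) (hn2 : ¬ IsLf T x2) (hn3 : ¬ IsLf T x3) :
    3 + (ld T x1 + ld T x2 + ld T x3) ≤ Fintype.card V := by
  have hdisj : ∀ {a b : V}, a ≠ b → Disjoint (leafFin T a) (leafFin T b) := by
    intro a b hab
    rw [Finset.disjoint_left]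
    intro y hy1 hy2
    rw [mem_leafFin] at hy1 hy2
    exact hab (unique_nbr hy1.2 hy1.1.symm hy2.1.symm)
  have hnm : ∀ {a b : V}, ¬ IsLf T a → a ∉ leafFin T b := by
    intro a b ha hmem
    exact ha (mem_leafFin.mp hmem).2
  have hU : (leafFin T x1 ∪ leafFin T x2 ∪ leafFin T x3).card
      = ld T x1 + ld T x2 + ld T x3 := by
    rw [Finset.card_union_of_disjoint, Finset.card_union_of_disjoint (hdisj h12)]
    · rfl
    · rw [Finset.disjoint_union_left]
      exact ⟨hdisj h13, hdisj h23⟩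
  have h3m : x3 ∉ leafFin T x1 ∪ leafFin T x2 ∪ leafFin T x3 := by
    simp only [Finset.mem_union]
    rintro ((h | h) | h) <;> exact hnm hn3 h
  have h2m : x2 ∉ insert x3 (leafFin T x1 ∪ leafFin T x2 ∪ leafFin T x3) := by
    simp only [Finset.mem_insert, Finset.mem_union]
    rintro (h | (h | h) | h)
    · exact h23 h
    · exact hnm hn2 h
    · exact hnm hn2 h
    · exact hnm hn2 h
  have h1m : x1 ∉ insert x2 (insert x3 (leafFin T x1 ∪ leafFin T x2 ∪ leafFin T x3)) := by
    simp only [Finset.mem_insert, Finset.mem_union]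
    rintro (h | h | (h | h) | h)
    · exact h12 h
    · exact h13 h
    · exact hnm hn1 h
    · exact hnm hn1 h
    · exact hnm hn1 h
  have := Finset.card_le_univ
    (insert x1 (insert x2 (insert x3 (leafFin T x1 ∪ leafFin T x2 ∪ leafFin T x3))))
  rw [Finset.card_insert_of_notMem h1m, Finset.card_insert_of_notMem h2m,
    Finset.card_insert_of_notMem h3m, hU] at this
  omega

lemma count_extra {T : SimpleGraph V} {v z0 x y : V} (hvz : v ≠ z0)
    (hnv : ¬ IsLf T v) (hnz : ¬ IsLf T z0) (hxy : x ≠ y)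
    (hx : x ∉ insert v (insert z0 (leafFin T v ∪ leafFin T z0)))
    (hy : y ∉ insert v (insert z0 (leafFin T v ∪ leafFin T z0))) :
    4 + (ld T v + ld T z0) ≤ Fintype.card V := by
  have hdisj : Disjoint (leafFin T v) (leafFin T z0) := by
    rw [Finset.disjoint_left]
    intro w hw1 hw2
    rw [mem_leafFin] at hw1 hw2
    exact hvz (unique_nbr hw1.2 hw1.1.symm hw2.1.symm)
  have hnm : ∀ {a b : V}, ¬ IsLf T a → a ∉ leafFin T b := by
    intro a b ha hmem
    exact ha (mem_leafFin.mp hmem).2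
  have hU : (leafFin T v ∪ leafFin T z0).card = ld T v + ld T z0 :=
    Finset.card_union_of_disjoint hdisj
  have hz0m : z0 ∉ leafFin T v ∪ leafFin T z0 := by
    simp only [Finset.mem_union]
    rintro (h | h) <;> exact hnm hnz h
  have hvm : v ∉ insert z0 (leafFin T v ∪ leafFin T z0) := by
    simp only [Finset.mem_insert, Finset.mem_union]
    rintro (h | h | h)
    · exact hvz h
    · exact hnm hnv h
    · exact hnm hnv h
  have hym : y ∉ insert v (insert z0 (leafFin T v ∪ leafFin T z0)) := hy
  have hxm : x ∉ insert y (insert v (insert z0 (leafFin T v ∪ leafFin T z0))) := by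
    rw [Finset.mem_insert]
    rintro (h | h)
    · exact hxy h
    · exact hx h
  have := Finset.card_le_univ
    (insert x (insert y (insert v (insert z0 (leafFin T v ∪ leafFin T z0)))))
  rw [Finset.card_insert_of_notMem hxm, Finset.card_insert_of_notMem hym,
    Finset.card_insert_of_notMem hvm, Finset.card_insert_of_notMem hz0m, hU] at this
  omega

end Comb
end STLD


/-- Theorem 1.1: a connected graph of order 12 with `q(G) > 7 + 3 * Real.sqrt 5` has a
spanning tree with leaf degree at most 4. -/
theorem signlessLap_spectral_radius_spanning_tree_leaf_degree_of_card_12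
    {V : Type*} [Fintype V] [DecidableEq V] (G : SimpleGraph V)
    (hn : Fintype.card V = 12) (hG : G.Connected)
    (hq : 7 + 3 * Real.sqrt 5 < qRadius G) :
    HasSpanningTreeWithLeafDegLE G 4 := by
  classical
  have hcard3 : 3 ≤ Fintype.card V := by omega
  obtain ⟨T₀, hT₀G, hT₀⟩ := STLD.exists_spanning_tree G hG
  have hex : ∃ n : ℕ, ∃ T : SimpleGraph V, (T ≤ G ∧ T.IsTree) ∧ STLD.Phi T = n :=
    ⟨STLD.Phi T₀, T₀, ⟨hT₀G, hT₀⟩, rfl⟩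
  obtain ⟨T, ⟨hTG, hT⟩, hPhi⟩ := Nat.find_spec hex
  have hmin : ∀ T', T' ≤ G → T'.IsTree → STLD.Phi T ≤ STLD.Phi T' := by
    intro T' h1 h2
    rw [hPhi]
    exact Nat.find_min' hex ⟨T', ⟨h1, h2⟩, rfl⟩
  refine ⟨T, hTG, hT, fun v => ?_⟩
  rw [STLD.ld_eq_ncard]
  by_contra hld
  push_neg at hld
  have hldv : 5 ≤ STLD.ld T v := hld
  have hdegv5 : 5 ≤ STLD.deg T v := le_trans hldv (STLD.ld_le_deg v)
  have hdegv : 3 ≤ STLD.deg T v := by omega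
  have hnlv : ¬ STLD.IsLf T v := STLD.not_isLf_of_two_le_deg (by omega)
  have hKey : ∀ u' ∈ STLD.leafFin T v, ∀ z, G.Adj u' z → z ≠ v →
      2 ≤ STLD.deg T z ∧ STLD.ld T v ≤ STLD.ld T z + 1 := by
    intro u' hu' z hz hzv
    obtain ⟨h1, h2⟩ := STLD.mem_leafFin.mp hu'
    exact STLD.key_step hcard3 hT hTG hmin h2 h1.symm hdegv hz hzv
  by_cases hpend : ∀ u' ∈ STLD.leafFin T v, ∀ z, G.Adj u' z → z = v
  · obtain ⟨P, hPsub, hPcard⟩ := Finset.exists_subset_card_eq (s := STLD.leafFin T v) hldv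
    have hvP : v ∉ P := by
      intro h
      exact T.irrefl (STLD.mem_leafFin.mp (hPsub h)).1
    have hbound := STLD.qRadius_le_case_a G hn v P hPcard hvP
      (fun x hx y hy => hpend x (hPsub hx) y hy)
    linarith
  · push_neg at hpend
    obtain ⟨u0, hu0, z0, hz0, hz0v⟩ := hpend
    obtain ⟨hdz0, hldz0⟩ := hKey u0 hu0 z0 hz0 hz0v
    have hldz0' : 4 ≤ STLD.ld T z0 := by omega
    have hnlz0 : ¬ STLD.IsLf T z0 := STLD.not_isLf_of_two_le_deg hdz0
    have huniq : ∀ z, 2 ≤ STLD.deg T z → 3 ≤ STLD.ld T z → z ≠ v → z = z0 := by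
      intro z h1 h2 h3
      by_contra hne
      have hc := STLD.count3 (T := T) (Ne.symm hz0v) (Ne.symm h3) (fun h => hne h.symm)
        hnlv hnlz0 (STLD.not_isLf_of_two_le_deg h1)
      rw [hn] at hc
      omega
    have hLv : ∀ u' ∈ STLD.leafFin T v, ∀ y, G.Adj u' y → y = v ∨ y = z0 := by
      intro u' hu' y hy
      by_cases hyv : y = v
      · exact Or.inl hyv
      · obtain ⟨h1, h2⟩ := hKey u' hu' y hy hyv
        exact Or.inr (huniq y h1 (by omega) hyv)
    have hdegz0 : 3 ≤ STLD.deg T z0 := by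
      have := STLD.ld_le_deg (T := T) z0
      omega
    have hLz : ∀ u' ∈ STLD.leafFin T z0, ∀ y, G.Adj u' y → y = v ∨ y = z0 := by
      intro u' hu' y hy
      by_cases hyz : y = z0
      · exact Or.inr hyz
      · obtain ⟨h1, h2⟩ := STLD.mem_leafFin.mp hu'
        obtain ⟨hd2, hle⟩ := STLD.key_step hcard3 hT hTG hmin h2 h1.symm hdegz0 hy hyz
        by_cases hyv : y = v
        · exact Or.inl hyv
        · exact absurd (huniq y hd2 (by omega) hyv) hyz
    have hfinal : ∀ x, x ≠ v → x ≠ z0 → ∀ y, G.Adj x y → y = v ∨ y = z0 := by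
      intro x hxv hxz y hxy
      by_cases hx1 : x ∈ STLD.leafFin T v
      · exact hLv x hx1 y hxy
      by_cases hx2 : x ∈ STLD.leafFin T z0
      · exact hLz x hx2 y hxy
      by_cases hyv : y = v
      · exact Or.inl hyv
      by_cases hyz : y = z0
      · exact Or.inr hyz
      exfalso
      have hy1 : y ∉ STLD.leafFin T v := by
        intro h
        rcases hLv y h x hxy.symm with h' | h'
        · exact hxv h'
        · exact hxz h'
      have hy2 : y ∉ STLD.leafFin T z0 := by
        intro h
        rcases hLz y h x hxy.symm with h' | h'
        · exact hxv h'
        · exact hxz h'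
      have hc := STLD.count_extra (T := T) (Ne.symm hz0v) hnlv hnlz0 hxy.ne
        (by
          simp only [Finset.mem_insert, Finset.mem_union]
          rintro (h | h | h | h)
          exacts [hxv h, hxz h, hx1 h, hx2 h])
        (by
          simp only [Finset.mem_insert, Finset.mem_union]
          rintro (h | h | h | h)
          exacts [hyv h, hyz h, hy1 h, hy2 h])
      rw [hn] at hc
      omega
    have hbound := STLD.qRadius_le_case_b G hn v z0 hfinal
    linarith
end

section
/- Let $k$ and $s$ be positive integers. The signless Laplacian spectral radius of the graph $K_s \vee ((k+1)s+1)K_1$ equals $\frac{(k+4)s-1+\sqrt{(k^{2}+8k+8)s^{2}-2ks+1}}{2}$. -/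
open Finset in
/-- Membership in the real spectrum of a real matrix is equivalent to having a real
eigenvector. -/
private lemma mem_spectrum_iff_eigen {n : Type*} [Fintype n] [DecidableEq n]
    (M : Matrix n n ℝ) (μ : ℝ) :
    μ ∈ spectrum ℝ M ↔ ∃ v : n → ℝ, v ≠ 0 ∧ M.mulVec v = μ • v := by
  have key : ∀ v : n → ℝ,
      (algebraMap ℝ (Matrix n n ℝ) μ - M).mulVec v = μ • v - M.mulVec v := by
    intro v
    rw [Matrix.sub_mulVec, Algebra.algebraMap_eq_smul_one, Matrix.smul_mulVec,
      Matrix.one_mulVec]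
  rw [spectrum.mem_iff, Matrix.isUnit_iff_isUnit_det, isUnit_iff_ne_zero, not_ne_iff,
    ← Matrix.exists_mulVec_eq_zero_iff]
  constructor
  · rintro ⟨v, hv, h⟩
    rw [key, sub_eq_zero] at h
    exact ⟨v, hv, h.symm⟩
  · rintro ⟨v, hv, h⟩
    exact ⟨v, hv, by rw [key, h, sub_self]⟩

private lemma sum_ite_ne {s : ℕ} (i : Fin s) (f : Fin s → ℝ) :
    (∑ j, if i ≠ j then f j else 0) = (∑ j, f j) - f i := by
  have h : ∀ j : Fin s, (if i ≠ j then f j else 0)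
      = f j - (if i = j then f j else 0) := by
    intro j; by_cases h : i = j <;> simp [h]
  rw [Finset.sum_congr rfl fun j _ => h j, Finset.sum_sub_distrib, Finset.sum_ite_eq]
  simp

/-- Action of the signless Laplacian of `K_s ∨ t K_1` on a vector, at a clique vertex. -/
private lemma mulVec_inl (s t : ℕ) (v : Fin s ⊕ Fin t → ℝ) (i : Fin s) :
    (signlessLap ((⊤ : SimpleGraph (Fin s)).graphJoin (⊥ : SimpleGraph (Fin t)))).mulVec v
        (Sum.inl i) =
      ((s : ℝ) + t - 2) * v (Sum.inl i) + (∑ j, v (Sum.inl j)) + (∑ j, v (Sum.inr j)) := by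
  classical
  set G := (⊤ : SimpleGraph (Fin s)).graphJoin (⊥ : SimpleGraph (Fin t)) with hG
  letI : DecidableRel G.Adj := Classical.decRel _
  have hadj : ∀ x y, G.Adj x y ↔
      (match x, y with
       | Sum.inl a, Sum.inl b => a ≠ b
       | Sum.inr _, Sum.inr _ => False
       | Sum.inl _, Sum.inr _ => True
       | Sum.inr _, Sum.inl _ => True) := by
    rintro (a | a) (b | b) <;> simp [hG, SimpleGraph.graphJoin]
  have hdeg : (G.degree (Sum.inl i) : ℝ) = (s : ℝ) + t - 1 := by
    rw [SimpleGraph.degree_eq_sum_if_adj]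
    rw [Fintype.sum_sum_type]
    have h1 : (∑ j : Fin s, if G.Adj (Sum.inl i) (Sum.inl j) then (1 : ℝ) else 0)
        = (s : ℝ) - 1 := by
      have : ∀ j : Fin s, (if G.Adj (Sum.inl i) (Sum.inl j) then (1 : ℝ) else 0)
          = (if i ≠ j then (1 : ℝ) else 0) := by
        intro j; simp [hadj]
      rw [Finset.sum_congr rfl fun j _ => this j, sum_ite_ne]
      simp
    have h2 : (∑ j : Fin t, if G.Adj (Sum.inl i) (Sum.inr j) then (1 : ℝ) else 0)
        = (t : ℝ) := by
      have : ∀ j : Fin t, (if G.Adj (Sum.inl i) (Sum.inr j) then (1 : ℝ) else 0) = 1 := by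
        intro j; simp [hadj]
      rw [Finset.sum_congr rfl fun j _ => this j]
      simp
    rw [h1, h2]; ring
  show ((G.degMatrix ℝ + G.adjMatrix ℝ).mulVec v) (Sum.inl i) = _
  rw [Matrix.add_mulVec, Pi.add_apply, SimpleGraph.degMatrix_mulVec_apply,
    SimpleGraph.adjMatrix_mulVec_apply]
  rw [SimpleGraph.neighborFinset_eq_filter, Finset.sum_filter, Fintype.sum_sum_type]
  have h1 : (∑ j : Fin s, if G.Adj (Sum.inl i) (Sum.inl j) then v (Sum.inl j) else 0)
      = (∑ j, v (Sum.inl j)) - v (Sum.inl i) := by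
    have : ∀ j : Fin s, (if G.Adj (Sum.inl i) (Sum.inl j) then v (Sum.inl j) else 0)
        = (if i ≠ j then v (Sum.inl j) else 0) := by
      intro j; simp [hadj]
    rw [Finset.sum_congr rfl fun j _ => this j, sum_ite_ne]
  have h2 : (∑ j : Fin t, if G.Adj (Sum.inl i) (Sum.inr j) then v (Sum.inr j) else 0)
      = ∑ j, v (Sum.inr j) := by
    refine Finset.sum_congr rfl fun j _ => ?_
    simp [hadj]
  rw [h1, h2, hdeg]; ring

/-- Action of the signless Laplacian of `K_s ∨ t K_1` on a vector, at an independent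
vertex. -/
private lemma mulVec_inr (s t : ℕ) (v : Fin s ⊕ Fin t → ℝ) (j : Fin t) :
    (signlessLap ((⊤ : SimpleGraph (Fin s)).graphJoin (⊥ : SimpleGraph (Fin t)))).mulVec v
        (Sum.inr j) =
      (s : ℝ) * v (Sum.inr j) + (∑ i, v (Sum.inl i)) := by
  classical
  set G := (⊤ : SimpleGraph (Fin s)).graphJoin (⊥ : SimpleGraph (Fin t)) with hG
  letI : DecidableRel G.Adj := Classical.decRel _
  have hadj1 : ∀ b : Fin s, G.Adj (Sum.inr j) (Sum.inl b) := by
    intro b; simp [hG, SimpleGraph.graphJoin]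
  have hadj2 : ∀ b : Fin t, ¬ G.Adj (Sum.inr j) (Sum.inr b) := by
    intro b; simp [hG, SimpleGraph.graphJoin]
  have hdeg : (G.degree (Sum.inr j) : ℝ) = (s : ℝ) := by
    rw [SimpleGraph.degree_eq_sum_if_adj]
    rw [Fintype.sum_sum_type]
    simp [hadj1, hadj2]
  show ((G.degMatrix ℝ + G.adjMatrix ℝ).mulVec v) (Sum.inr j) = _
  rw [Matrix.add_mulVec, Pi.add_apply, SimpleGraph.degMatrix_mulVec_apply,
    SimpleGraph.adjMatrix_mulVec_apply]
  rw [SimpleGraph.neighborFinset_eq_filter, Finset.sum_filter, Fintype.sum_sum_type]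
  rw [hdeg]
  simp [hadj1, hadj2]

set_option maxHeartbeats 2000000 in
/-- The signless Laplacian spectral radius of `K_s ∨ ((k+1)s+1)K₁`. -/
theorem qRadius_Ks_join_isolated (k s : ℕ) (hk : 1 ≤ k) (hs : 1 ≤ s) :
    qRadius ((⊤ : SimpleGraph (Fin s)).graphJoin
        (⊥ : SimpleGraph (Fin ((k + 1) * s + 1)))) =
      (((k : ℝ) + 4) * s - 1 +
        Real.sqrt (((k : ℝ) ^ 2 + 8 * k + 8) * s ^ 2 - 2 * k * s + 1)) / 2 := by
  classical
  set t : ℕ := (k + 1) * s + 1 with ht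
  set K : ℝ := (k : ℝ) with hKdef
  set S : ℝ := (s : ℝ) with hSdef
  have hK1 : (1 : ℝ) ≤ K := by rw [hKdef]; exact_mod_cast hk
  have hS1 : (1 : ℝ) ≤ S := by rw [hSdef]; exact_mod_cast hs
  have hS0 : S ≠ 0 := by linarith
  have hT : ((t : ℕ) : ℝ) = (K + 1) * S + 1 := by
    rw [ht]; push_cast; ring
  set D : ℝ := (K ^ 2 + 8 * K + 8) * S ^ 2 - 2 * K * S + 1 with hDdef
  have hD0 : 0 ≤ D := by nlinarith
  set rt : ℝ := Real.sqrt D with hrtdef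
  have hrtsq : rt ^ 2 = D := Real.sq_sqrt hD0
  have hrt0 : 0 ≤ rt := Real.sqrt_nonneg _
  set P : ℝ := (K + 4) * S - 1 with hPdef
  set q : ℝ := (P + rt) / 2 with hqdef
  have hquadq : q ^ 2 - P * q + (2 * S ^ 2 - 2 * S) = 0 := by
    rw [hqdef]
    have : P ^ 2 - 4 * (2 * S ^ 2 - 2 * S) = D := by rw [hPdef, hDdef]; ring
    nlinarith [hrtsq]
  set G := (⊤ : SimpleGraph (Fin s)).graphJoin (⊥ : SimpleGraph (Fin t)) with hG
  -- `q` is an upper bound for the spectrum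
  have hub : ∀ μ ∈ spectrum ℝ (signlessLap G), μ ≤ q := by
    intro μ hμ
    obtain ⟨v, hv, heig⟩ := (mem_spectrum_iff_eigen _ μ).1 hμ
    set C : ℝ := ∑ i, v (Sum.inl i) with hC
    set Tm : ℝ := ∑ j, v (Sum.inr j) with hTm
    have hc : ∀ i : Fin s, (S + ((t : ℕ) : ℝ) - 2) * v (Sum.inl i) + C + Tm
        = μ * v (Sum.inl i) := by
      intro i
      have := congrFun heig (Sum.inl i)
      rw [mulVec_inl] at this
      simpa using this
    have ho : ∀ j : Fin t, S * v (Sum.inr j) + C = μ * v (Sum.inr j) := by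
      intro j
      have := congrFun heig (Sum.inr j)
      rw [mulVec_inr] at this
      simpa using this
    -- facts about `q`
    have hq_ge_S : S ≤ q := by
      rw [hqdef, hPdef]; nlinarith
    have hq_ge_ST : S + ((t : ℕ) : ℝ) - 2 ≤ q := by
      have h1 : (K * S - 1) ^ 2 ≤ D := by rw [hDdef]; nlinarith
      have h2 : K * S - 1 ≤ rt := by
        have := Real.sqrt_le_sqrt h1
        rw [Real.sqrt_sq_eq_abs] at this
        calc K * S - 1 ≤ |K * S - 1| := le_abs_self _
          _ ≤ rt := this
      rw [hT, hqdef, hPdef]; linarith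
    by_cases hμ1 : μ = S
    · rw [hμ1]; exact hq_ge_S
    by_cases hμ2 : μ = S + ((t : ℕ) : ℝ) - 2
    · rw [hμ2]; exact hq_ge_ST
    -- all coordinates are constant on each part
    set a : ℝ := (C + Tm) / (μ - (S + ((t : ℕ) : ℝ) - 2)) with ha
    set b : ℝ := C / (μ - S) with hb
    have hva : ∀ i : Fin s, v (Sum.inl i) = a := by
      intro i
      rw [ha, eq_div_iff (sub_ne_zero.2 hμ2)]
      have := hc i; ring_nf; ring_nf at this ⊢; linarith
    have hvb : ∀ j : Fin t, v (Sum.inr j) = b := by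
      intro j
      rw [hb, eq_div_iff (sub_ne_zero.2 hμ1)]
      have := ho j; ring_nf; ring_nf at this ⊢; linarith
    have hCa : C = S * a := by
      rw [hC, Finset.sum_congr rfl fun i _ => hva i]
      simp [mul_comm, hSdef]
    have hTb : Tm = ((t : ℕ) : ℝ) * b := by
      rw [hTm, Finset.sum_congr rfl fun j _ => hvb j]
      simp [mul_comm]
    have i0 : Fin s := ⟨0, hs⟩
    have j0 : Fin t := ⟨0, by omega⟩
    have e1 : (μ - (S + ((t : ℕ) : ℝ) - 2)) * a = S * a + ((t : ℕ) : ℝ) * b := by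
      have := hc i0
      rw [hva i0, hCa, hTb] at this
      linarith
    have e2 : (μ - S) * b = S * a := by
      have := ho j0
      rw [hvb j0, hCa] at this
      linarith
    have hane : a ≠ 0 := by
      intro ha0
      have hb0 : b = 0 := by
        rw [ha0] at e1
        have ht0 : (0 : ℝ) < ((t : ℕ) : ℝ) := by rw [hT]; nlinarith
        have : ((t : ℕ) : ℝ) * b = 0 := by linarith
        exact (mul_eq_zero.1 this).resolve_left (ne_of_gt ht0)
      apply hv
      funext x
      rcases x with i | j
      · rw [hva i, ha0]; rfl
      · rw [hvb j, hb0]; rfl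
    have e1' : (μ - (2 * S + ((t : ℕ) : ℝ) - 2)) * a = ((t : ℕ) : ℝ) * b := by
      linarith [e1]
    have key : ((μ - (2 * S + ((t : ℕ) : ℝ) - 2)) * (μ - S) - ((t : ℕ) : ℝ) * S) * a = 0 := by
      linear_combination (μ - S) * e1' + ((t : ℕ) : ℝ) * e2
    have hquad : μ ^ 2 - P * μ + (2 * S ^ 2 - 2 * S) = 0 := by
      have h0 := (mul_eq_zero.1 key).resolve_right hane
      rw [hT] at h0
      rw [hPdef]
      linear_combination h0
    have hfact : (2 * μ - P - rt) * (2 * μ - P + rt) = 0 := by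
      have : P ^ 2 - 4 * (2 * S ^ 2 - 2 * S) = D := by rw [hPdef, hDdef]; ring
      nlinarith [hquad, hrtsq]
    rcases mul_eq_zero.1 hfact with h | h
    · rw [hqdef]; linarith
    · rw [hqdef]; linarith
  -- `q` is in the spectrum
  have hmem : q ∈ spectrum ℝ (signlessLap G) := by
    rw [mem_spectrum_iff_eigen]
    refine ⟨Sum.elim (fun _ => q - S) (fun _ => S), ?_, ?_⟩
    · intro h
      have := congrFun h (Sum.inr (⟨0, by omega⟩ : Fin t))
      simp at this
      exact hS0 this
    · funext x
      rcases x with i | j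
      · rw [mulVec_inl]
        simp only [Sum.elim_inl, Sum.elim_inr, Pi.smul_apply, smul_eq_mul]
        rw [Finset.sum_const, Finset.sum_const]
        simp only [Finset.card_univ, Fintype.card_fin, nsmul_eq_mul]
        rw [hT, ← hSdef]
        rw [hPdef] at hquadq
        linear_combination -hquadq
      · rw [mulVec_inr]
        simp only [Sum.elim_inl, Sum.elim_inr, Pi.smul_apply, smul_eq_mul]
        rw [Finset.sum_const]
        simp only [Finset.card_univ, Fintype.card_fin, nsmul_eq_mul]
        ring
  have : qRadius G = q := by
    rw [qRadius]
    exact IsGreatest.csSup_eq ⟨hmem, hub⟩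
  rw [hG] at this
  rw [this, hqdef, hPdef, hrtdef, hDdef, hKdef, hSdef]
end
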